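/- Fix integers n, m, l ≥ 1, let E ∈ ℝ^{n×n}, F ∈ ℝ^{n×m}, G ∈ ℝ^{n×l}, H ∈ ℝ^{m×n}, and let (x̂, u, y) be a compensator trajectory. Fix i ∈ {1,…,m} and assume F_x^i ∈ ℝ^{n×n} is invertible. Then for every t ≥ 0 the compensator state can be reconstructed from the window of n inputs and n outputs: x̂(t) = (F_x^i)^{−1} ( (P_i − M_u^i) U_n(t) − M_y^i Y_n(t+1) ). (State-reconstruction step in the proof of Lemma 2 in the Appendix.) -/
import Mathlib


open Matrix

noncomputable section

namespace LQGPaper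

variable {n m l : ℕ}

/-- Row block matrix `(E^{n-1}B, E^{n-2}B, …, B) ∈ ℝ^{n×nk}`. -/
def Frow {k : ℕ} (E : Matrix (Fin n) (Fin n) ℝ) (B : Matrix (Fin n) (Fin k) ℝ) :
    Matrix (Fin n) (Fin n × Fin k) ℝ :=
  Matrix.of fun i q => (E ^ (n - 1 - (q.1 : ℕ)) * B) i q.2

/-- Strictly block-lower-triangular matrix (`M̃_u`/`M̃_y` style) whose `(i,j)` block
(0-indexed, blocks of size `n × k`) is `E^{i-j-1} B` for `i > j` and `0` otherwise. -/
def Mlow {k : ℕ} (E : Matrix (Fin n) (Fin n) ℝ) (B : Matrix (Fin n) (Fin k) ℝ) :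
    Matrix (Fin n × Fin n) (Fin n × Fin k) ℝ :=
  Matrix.of fun p q =>
    if (q.1 : ℕ) < (p.1 : ℕ) then (E ^ ((p.1 : ℕ) - (q.1 : ℕ) - 1) * B) p.2 q.2 else 0

/-- Strictly block-lower-triangular matrix (`M_u`/`M_y` style) whose `(i,j)` block
(0-indexed, blocks of size `m × k`) is `H E^{i-j-1} B` for `i > j` and `0` otherwise. -/
def MlowH {k : ℕ} (E : Matrix (Fin n) (Fin n) ℝ) (B : Matrix (Fin n) (Fin k) ℝ)
    (H : Matrix (Fin m) (Fin n) ℝ) :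
    Matrix (Fin n × Fin m) (Fin n × Fin k) ℝ :=
  Matrix.of fun p q =>
    if (q.1 : ℕ) < (p.1 : ℕ) then (H * E ^ ((p.1 : ℕ) - (q.1 : ℕ) - 1) * B) p.2 q.2 else 0

/-- The block column `F_x = (H; HE; …; HE^{n-1}) ∈ ℝ^{mn×n}`. -/
def Fx (E : Matrix (Fin n) (Fin n) ℝ) (H : Matrix (Fin m) (Fin n) ℝ) :
    Matrix (Fin n × Fin m) (Fin n) ℝ :=
  Matrix.of fun p j => (H * E ^ (p.1 : ℕ)) p.2 j

/-- The selection matrix `P_i = I_n ⊗ e_iᵀ ∈ ℝ^{n×nm}`. -/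
def Pmat (n : ℕ) {m : ℕ} (i : Fin m) : Matrix (Fin n) (Fin n × Fin m) ℝ :=
  Matrix.of fun r q => if r = q.1 ∧ q.2 = i then 1 else 0

/-- The Kronecker product `a ⊗ I_q ∈ ℝ^{q×nq}` of a row vector `a ∈ ℝ^{1×n}`
with the identity `I_q`. -/
def aKron (a : Fin n → ℝ) (q : ℕ) : Matrix (Fin q) (Fin n × Fin q) ℝ :=
  Matrix.of fun i p => if i = p.2 then a p.1 else 0

/-- The row vector `a ∈ ℝ^{1×n}` as a `1 × n` matrix. -/
def aRow (a : Fin n → ℝ) : Matrix (Fin 1) (Fin n) ℝ := Matrix.of fun _ k => a k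

/-- The `i`-th row of `H` as a `1 × n` matrix. -/
def Hrow (H : Matrix (Fin m) (Fin n) ℝ) (i : Fin m) : Matrix (Fin 1) (Fin n) ℝ :=
  Matrix.of fun _ j => H i j

/-- The estimation matrix
`L_est = [[F_u − (a⊗I_n)M̃_u , F_y − (a⊗I_n)M̃_y]; [a⊗I_m , 0]] ∈ ℝ^{(n+m)×(m+l)n}`. -/
def Lest (E : Matrix (Fin n) (Fin n) ℝ) (F : Matrix (Fin n) (Fin m) ℝ)
    (G : Matrix (Fin n) (Fin l) ℝ) (a : Fin n → ℝ) :
    Matrix (Fin n ⊕ Fin m) ((Fin n × Fin m) ⊕ (Fin n × Fin l)) ℝ :=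
  Matrix.fromBlocks (Frow E F - aKron a n * Mlow E F) (Frow E G - aKron a n * Mlow E G)
    (aKron a m) 0

/-- A compensator trajectory: `x̂(t+1) = E x̂(t) + F u(t) + G y(t+1)`, `u(t) = H x̂(t)`. -/
def IsCompTraj (E : Matrix (Fin n) (Fin n) ℝ) (F : Matrix (Fin n) (Fin m) ℝ)
    (G : Matrix (Fin n) (Fin l) ℝ) (H : Matrix (Fin m) (Fin n) ℝ)
    (xh : ℕ → Fin n → ℝ) (u : ℕ → Fin m → ℝ) (y : ℕ → Fin l → ℝ) : Prop :=
  (∀ t, xh (t + 1) = E.mulVec (xh t) + F.mulVec (u t) + G.mulVec (y (t + 1))) ∧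
    ∀ t, u t = H.mulVec (xh t)

/-- The stacked vector `(v(t); v(t+1); …; v(t+r-1))`. -/
def stack {k : ℕ} (v : ℕ → Fin k → ℝ) (r t : ℕ) : Fin r × Fin k → ℝ :=
  fun p => v (t + (p.1 : ℕ)) p.2

private lemma sum_ite_lt {N r : ℕ} (hr : r ≤ N) (g : ℕ → ℝ) :
    ∑ a ∈ Finset.range N, (if a < r then g a else 0) = ∑ a ∈ Finset.range r, g a := by
  rw [← Finset.sum_subset (Finset.range_subset_range.mpr hr)
      (fun x _ hx => if_neg (by simpa using hx))]
  exact Finset.sum_congr rfl fun x hx => if_pos (Finset.mem_range.mp hx)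

private lemma traj_state {n m l : ℕ} {E : Matrix (Fin n) (Fin n) ℝ}
    {F : Matrix (Fin n) (Fin m) ℝ} {G : Matrix (Fin n) (Fin l) ℝ}
    {H : Matrix (Fin m) (Fin n) ℝ} {xh : ℕ → Fin n → ℝ} {u : ℕ → Fin m → ℝ}
    {y : ℕ → Fin l → ℝ} (htraj : IsCompTraj E F G H xh u y) :
    ∀ k t, xh (t + k) = (E ^ k).mulVec (xh t) +
      ∑ j ∈ Finset.range k, (E ^ (k - 1 - j)).mulVec
        (F.mulVec (u (t + j)) + G.mulVec (y (t + j + 1))) := by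
  intro k
  induction k with
  | zero => intro t; simp [Matrix.one_mulVec]
  | succ k ih =>
    intro t
    rw [show t + (k + 1) = (t + k) + 1 from rfl, htraj.1 (t + k), ih t,
      Finset.sum_range_succ]
    rw [Matrix.mulVec_add, Matrix.mulVec_mulVec, ← pow_succ']
    have hsum : E.mulVec (∑ j ∈ Finset.range k,
        (E ^ (k - 1 - j)).mulVec (F.mulVec (u (t + j)) + G.mulVec (y (t + j + 1)))) =
        ∑ j ∈ Finset.range k,
        (E ^ (k + 1 - 1 - j)).mulVec (F.mulVec (u (t + j)) + G.mulVec (y (t + j + 1))) := by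
      rw [show E.mulVec (∑ j ∈ Finset.range k,
        (E ^ (k - 1 - j)).mulVec (F.mulVec (u (t + j)) + G.mulVec (y (t + j + 1)))) =
        ∑ j ∈ Finset.range k, E.mulVec
          ((E ^ (k - 1 - j)).mulVec (F.mulVec (u (t + j)) + G.mulVec (y (t + j + 1)))) from
        map_sum E.mulVecLin _ _]
      refine Finset.sum_congr rfl fun j hj => ?_
      have hjk : j < k := Finset.mem_range.mp hj
      rw [Matrix.mulVec_mulVec, ← pow_succ', show k - 1 - j + 1 = k + 1 - 1 - j by omega]
    rw [hsum, show k + 1 - 1 - k = 0 by omega, pow_zero, Matrix.one_mulVec]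
    abel

/-- state reconstruction from a window of inputs and outputs,
proof of Lemma 2. -/
theorem state_reconstruction (n m l : ℕ) (hn : 1 ≤ n) (hm : 1 ≤ m) (hl : 1 ≤ l)
    (E : Matrix (Fin n) (Fin n) ℝ) (F : Matrix (Fin n) (Fin m) ℝ)
    (G : Matrix (Fin n) (Fin l) ℝ) (H : Matrix (Fin m) (Fin n) ℝ)
    (xh : ℕ → Fin n → ℝ) (u : ℕ → Fin m → ℝ) (y : ℕ → Fin l → ℝ)
    (htraj : IsCompTraj E F G H xh u y)
    (i : Fin m) (hFxi : IsUnit (Pmat n i * Fx E H)) (t : ℕ) :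
    xh t =
      ((Pmat n i * Fx E H)⁻¹).mulVec
        ((Pmat n i - Pmat n i * MlowH E F H).mulVec (stack u n t) -
          (Pmat n i * MlowH E G H).mulVec (stack y n (t + 1))) := by
  have hdet : IsUnit (Pmat n i * Fx E H).det :=
    ((Matrix.isUnit_iff_isUnit_det _).mp hFxi)
  have hmain : (Pmat n i * Fx E H).mulVec (xh t) =
      (Pmat n i - Pmat n i * MlowH E F H).mulVec (stack u n t) -
        (Pmat n i * MlowH E G H).mulVec (stack y n (t + 1)) := by
    funext r
    -- entries of `Pmat * Fx`
    have hAapp : ∀ j, (Pmat n i * Fx E H) r j = (H * E ^ (r : ℕ)) i j := by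
      intro j
      simp [Pmat, Fx, Matrix.mul_apply, Fintype.sum_prod_type, ite_and]
    -- left-hand side
    have hL : (Pmat n i * Fx E H).mulVec (xh t) r =
        (H.mulVec ((E ^ (r : ℕ)).mulVec (xh t))) i := by
      simp only [Matrix.mulVec, dotProduct, hAapp, Matrix.mul_apply, Finset.sum_mul,
        Finset.mul_sum]
      rw [Finset.sum_comm]
      exact Finset.sum_congr rfl fun _ _ => Finset.sum_congr rfl fun _ _ => by ring
    -- pieces of the right-hand side
    have hPu : (Pmat n i).mulVec (stack u n t) r = u (t + (r : ℕ)) i := by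
      simp [Pmat, Matrix.mulVec, dotProduct, Fintype.sum_prod_type, ite_and, stack]
    have hPM : ∀ {k : ℕ} (B : Matrix (Fin n) (Fin k) ℝ) (q : Fin n × Fin k),
        (Pmat n i * MlowH E B H) r q = (MlowH E B H) (r, i) q := by
      intro k B q
      simp [Pmat, Matrix.mul_apply, Fintype.sum_prod_type, ite_and]
    have hMv : ∀ {k : ℕ} (B : Matrix (Fin n) (Fin k) ℝ) (v : ℕ → Fin k → ℝ) (s : ℕ),
        (Pmat n i * MlowH E B H).mulVec (stack v n s) r =
          ∑ a ∈ Finset.range (r : ℕ),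
            ((H * E ^ ((r : ℕ) - 1 - a) * B).mulVec (v (s + a))) i := by
      intro k B v s
      have hsub : ∀ a : ℕ, (r : ℕ) - a - 1 = (r : ℕ) - 1 - a := fun a => by omega
      have h1 : (Pmat n i * MlowH E B H).mulVec (stack v n s) r =
          ∑ a : Fin n, (if (a : ℕ) < (r : ℕ) then
            ∑ b, (H * E ^ ((r : ℕ) - 1 - (a : ℕ)) * B) i b * v (s + (a : ℕ)) b else 0) := by
        simp only [Matrix.mulVec, dotProduct, Fintype.sum_prod_type, stack]
        refine Finset.sum_congr rfl fun a _ => ?_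
        by_cases ha : (a : ℕ) < (r : ℕ)
        · rw [if_pos ha]
          refine Finset.sum_congr rfl fun b _ => ?_
          rw [hPM]
          simp only [MlowH, Matrix.of_apply, if_pos ha, hsub]
        · rw [if_neg ha]
          refine Finset.sum_eq_zero fun b _ => ?_
          rw [hPM]
          simp only [MlowH, Matrix.of_apply, if_neg ha, zero_mul]
      rw [h1, Fin.sum_univ_eq_sum_range (fun a =>
        if a < (r : ℕ) then
          ∑ b, (H * E ^ ((r : ℕ) - 1 - a) * B) i b * v (s + a) b else 0),
        sum_ite_lt (le_of_lt r.isLt)]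
      exact Finset.sum_congr rfl fun a _ => by simp [Matrix.mulVec, dotProduct]
    -- trajectory expansion
    have hx := traj_state htraj (r : ℕ) t
    have hExp : (H.mulVec ((E ^ (r : ℕ)).mulVec (xh t))) i =
        u (t + (r : ℕ)) i -
          (∑ a ∈ Finset.range (r : ℕ),
            ((H * E ^ ((r : ℕ) - 1 - a) * F).mulVec (u (t + a))) i +
           ∑ a ∈ Finset.range (r : ℕ),
            ((H * E ^ ((r : ℕ) - 1 - a) * G).mulVec (y (t + a + 1))) i) := by
      have h2 : u (t + (r : ℕ)) = H.mulVec (xh (t + (r : ℕ))) := htraj.2 _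
      rw [h2, hx]
      rw [Matrix.mulVec_add, show H.mulVec (∑ j ∈ Finset.range (r : ℕ),
        (E ^ ((r : ℕ) - 1 - j)).mulVec (F.mulVec (u (t + j)) + G.mulVec (y (t + j + 1)))) =
        ∑ j ∈ Finset.range (r : ℕ), H.mulVec
          ((E ^ ((r : ℕ) - 1 - j)).mulVec (F.mulVec (u (t + j)) + G.mulVec (y (t + j + 1)))) from
        map_sum H.mulVecLin _ _]
      simp only [Matrix.mulVec_add, Matrix.mulVec_mulVec, Pi.add_apply, Finset.sum_apply,
        Finset.sum_add_distrib, ← Matrix.mul_assoc]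
      ring
    -- put everything together
    simp only [Pi.sub_apply, Matrix.sub_mulVec, hL, hPu, hMv, hExp]
    simp only [show ∀ a : ℕ, t + 1 + a = t + a + 1 from fun a => by omega]
    ring
  rw [hmain.symm, Matrix.mulVec_mulVec, Matrix.nonsing_inv_mul _ hdet, Matrix.one_mulVec]

end LQGPaper
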